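/- Let 𝔄 be a Bose–Mesner algebra. Then the diagonal evaluation character is independent of the base point: A(x,x) = A(x',x') for every A ∈ 𝔄 and all x, x' ∈ X. -/
import Mathlib


open MeasureTheory Topology Filter

noncomputable section

variable {X : Type*} {I : Type*}

/-- The matrix product `(A ∘ B)(x,z) = ∫ A(x,y) B(y,z) dμ(y)`. -/
def matProd [MeasurableSpace X] (μ : Measure X) (A B : X × X → ℂ) :
    X × X → ℂ :=
  fun p => ∫ y, A (p.1, y) * B (y, p.2) ∂μ

universe w

/-- `S` admits an approximate identity (a net) for the matrix product. -/
def HasApproxIdIn [TopologicalSpace X] [MeasurableSpace X] (μ : Measure X)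
    (S : Set C(X × X, ℂ)) : Prop :=
  ∃ (ι : Type w) (l : Filter ι), l.NeBot ∧ ∃ E : ι → C(X × X, ℂ),
    (∀ n, E n ∈ S) ∧ ∀ A : C(X × X, ℂ),
      TendstoUniformly (fun n => matProd μ ⇑(E n) ⇑A) ⇑A l ∧
      TendstoUniformly (fun n => matProd μ ⇑A ⇑(E n)) ⇑A l

/-- A Bose--Mesner algebra: a unital C*-subalgebra of `(C(X × X, ℂ), •, conj, ‖·‖∞)`
(i.e. a closed star-subalgebra for the pointwise (Hadamard) operations) satisfying
(BMA1a), (BMA1b), (BMA2), (BMA3). -/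
structure IsBMA [TopologicalSpace X] [MeasurableSpace X] (μ : Measure X)
    (S : Set C(X × X, ℂ)) : Prop where
  isSubalg : ∃ 𝔄 : StarSubalgebra ℂ C(X × X, ℂ), (𝔄 : Set C(X × X, ℂ)) = S
  isClosed : IsClosed S
  approxId : HasApproxIdIn.{w} μ S
  constJ : ∀ A ∈ S, ∃ c : ℂ, ∀ p : X × X, matProd μ ⇑A (fun _ => (1 : ℂ)) p = c
  mulClosed : ∀ A ∈ S, ∀ B ∈ S, ∃ C ∈ S, ∀ p : X × X, matProd μ ⇑A ⇑B p = C p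
  transpClosed : ∀ A ∈ S, ∃ B ∈ S, ∀ p : X × X, B p = A p.swap

/-- Commutativity of a Bose--Mesner algebra (for the matrix product). -/
def BMAComm [TopologicalSpace X] [MeasurableSpace X] (μ : Measure X)
    (S : Set C(X × X, ℂ)) : Prop :=
  ∀ A ∈ S, ∀ B ∈ S, matProd μ ⇑A ⇑B = matProd μ ⇑B ⇑A

/-- Symmetry of a Bose--Mesner algebra: `A⊤ = A` for all `A ∈ S`. -/
def BMASymm [TopologicalSpace X] (S : Set C(X × X, ℂ)) : Prop :=
  ∀ A ∈ S, ∀ p : X × X, A p.swap = A p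

theorem stmt7 [TopologicalSpace X] [CompactSpace X] [T2Space X] [Nonempty X]
    [MeasurableSpace X] [BorelSpace X]
    (μ : Measure X) [IsFiniteMeasure μ] [μ.Regular] [μ.IsOpenPosMeasure]
    (S : Set C(X × X, ℂ)) (hBMA : IsBMA μ S) :
    ∀ A ∈ S, ∀ x x' : X, A (x, x) = A (x', x') := by
  intro A hA x x'
  obtain ⟨𝔄, h𝔄⟩ := hBMA.isSubalg
  obtain ⟨ι, l, hl, E, hES, hE⟩ := hBMA.approxId
  -- transpose of E n
  have hB : ∀ n, ∃ B ∈ S, ∀ p : X × X, B p = E n p.swap := fun n => hBMA.transpClosed _ (hES n)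
  choose B hBS hBeq using hB
  -- A • B n ∈ S
  have hCS : ∀ n, A * B n ∈ S := by
    intro n
    rw [← h𝔄] at hA hBS ⊢
    exact mul_mem hA (hBS n)
  have hc : ∀ n, ∃ c : ℂ, ∀ p : X × X,
      matProd μ ⇑(A * B n) (fun _ => (1 : ℂ)) p = c := fun n => hBMA.constJ _ (hCS n)
  choose c hc using hc
  -- key identity
  have key : ∀ n (z : X), matProd μ ⇑A ⇑(E n) (z, z) = c n := by
    intro n z
    rw [← hc n (z, z)]
    simp only [matProd, ContinuousMap.coe_mul, Pi.mul_apply, mul_one]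
    congr 1
    ext y
    rw [hBeq n (z, y)]
    rfl
  have hlim : ∀ z : X, Filter.Tendsto (fun n => c n) l (𝓝 (A (z, z))) := by
    intro z
    have := ((hE A).2).tendsto_at (z, z)
    simpa only [key] using this
  exact tendsto_nhds_unique (hlim x) (hlim x')
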